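/- If j = j(n) → ∞ with j/n → ρ for fixed 0 < ρ < 1, then for each m ≥ 0 the probability P{Y_{n,j} = m} converges to ρ^{k/(k+1)}(1-ρ^{k/(k+1)})^m, i.e., Y_{n,j} converges in distribution to a geometric distribution with success probability ρ^{k/(k+1)}. -/

import Mathlib

open Filter

/-- Generalized binomial coefficient `binom(x, n) = x(x-1)⋯(x-n+1)/n!`. -/
noncomputable def gbinom (x : ℝ) (n : ℕ) : ℝ :=
  (∏ i ∈ Finset.range n, (x - i)) / (Nat.factorial n)

/-- `P{Y_{n,j} = m}`: the exact distribution of the out-degree of node `j` in a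
random ordered increasing `k`-tree of size `n`. -/
noncomputable def Pdeg (k n j m : ℕ) : ℝ :=
  gbinom ((j : ℝ) - k / (k + 1)) j
    / (gbinom ((n : ℝ) - k / (k + 1)) n * (Nat.choose n j : ℝ))
    * ∑ ℓ ∈ Finset.range (m + 1),
        (Nat.choose m ℓ : ℝ) * (-1) ^ ℓ * gbinom ((n : ℝ) - (k : ℝ) * (2 + ℓ) / (k + 1)) (n - j)

section Aux

/-- Telescoping product of successive quotients. -/
lemma prod_div_telescope' (g : ℕ → ℝ) (N : ℕ) (h : ∀ t, t ≤ N → g t ≠ 0) :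
    ∏ t ∈ Finset.range N, g t / g (t + 1) = g 0 / g N := by
  induction N with
  | zero => simp [div_self (h 0 le_rfl)]
  | succ N ih =>
    rw [Finset.prod_range_succ, ih (fun t ht => h t (ht.trans (Nat.le_succ N))),
      div_mul_div_comm, mul_comm (g 0) (g N), mul_div_mul_left _ _ (h N (Nat.le_succ N))]

/-- Reflection of a falling-factorial-type product. -/
lemma prod_reflect (x : ℝ) (N : ℕ) :
    ∏ i ∈ Finset.range N, (x - i) = ∏ i ∈ Finset.range N, (x - N + 1 + i) := by
  rw [← Finset.prod_range_reflect (fun i => x - (N : ℝ) + 1 + i) N]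
  apply Finset.prod_congr rfl
  intro i hi
  have hiN : i < N := Finset.mem_range.mp hi
  have hc : ((N - 1 - i : ℕ) : ℝ) = (N : ℝ) - 1 - i := by
    have h1 : 1 + i ≤ N := by omega
    rw [Nat.sub_sub, Nat.cast_sub h1]
    push_cast
    ring
  simp only [hc]
  ring

variable {α δ x ρ : ℝ} {j : ℕ → ℕ}

lemma pt_upper_ge_one (hα : 0 < α) (hδ : 1 ≤ δ) (hx : α + δ + 1 ≤ x) :
    (x - (α + δ)) / (x - α) ≤ ((x - 1 - α) / (x - α)) ^ δ := by
  have hδ0 : (0:ℝ) < δ := lt_of_lt_of_le one_pos hδ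
  have hxa : (0:ℝ) < x - α := by linarith
  have hs : (-1:ℝ) ≤ -(1 / (x - α)) := by
    have : 1 / (x - α) ≤ 1 := by
      rw [div_le_one hxa]; linarith
    linarith
  have key := one_add_mul_self_le_rpow_one_add hs hδ
  calc (x - (α + δ)) / (x - α) = 1 + δ * (-(1 / (x - α))) := by
        field_simp; ring
    _ ≤ (1 + -(1 / (x - α))) ^ δ := key
    _ = ((x - 1 - α) / (x - α)) ^ δ := by
        congr 1
        field_simp; ring

lemma pt_lower_ge_one (hα : 0 < α) (hδ : 1 ≤ δ) (hx : α + δ + 1 ≤ x) :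
    ((x - (α + δ)) / (x + 1 - (α + δ))) ^ δ ≤ (x - (α + δ)) / (x - α) := by
  have hδ0 : (0:ℝ) < δ := lt_of_lt_of_le one_pos hδ
  have hy : (0:ℝ) < x - (α + δ) := by linarith
  have hxa : (0:ℝ) < x - α := by linarith
  have hy1 : (0:ℝ) < x + 1 - (α + δ) := by linarith
  have hs : (-1:ℝ) ≤ 1 / (x - (α + δ)) := by
    have : (0:ℝ) < 1 / (x - (α + δ)) := by positivity
    linarith
  have key := one_add_mul_self_le_rpow_one_add hs hδ
  have key2 : (x - α) / (x - (α + δ)) ≤ ((x + 1 - (α + δ)) / (x - (α + δ))) ^ δ := by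
    calc (x - α) / (x - (α + δ)) = 1 + δ * (1 / (x - (α + δ))) := by
          field_simp; ring
      _ ≤ (1 + 1 / (x - (α + δ))) ^ δ := key
      _ = ((x + 1 - (α + δ)) / (x - (α + δ))) ^ δ := by
          congr 1; field_simp; ring
  have hpos : (0:ℝ) < (x - α) / (x - (α + δ)) := by positivity
  have hinv := inv_anti₀ hpos key2
  rwa [← Real.inv_rpow (by positivity), inv_div, inv_div] at hinv

lemma pt_lower_le_one (hα : 0 < α) (hδ0 : 0 < δ) (hδ : δ ≤ 1) (hx : α + δ + 1 ≤ x) :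
    ((x - 1 - α) / (x - α)) ^ δ ≤ (x - (α + δ)) / (x - α) := by
  have hxa : (0:ℝ) < x - α := by linarith
  have hs : (-1:ℝ) ≤ -(1 / (x - α)) := by
    have : 1 / (x - α) ≤ 1 := by
      rw [div_le_one hxa]; linarith
    linarith
  have key := rpow_one_add_le_one_add_mul_self hs hδ0.le hδ
  calc ((x - 1 - α) / (x - α)) ^ δ = (1 + -(1 / (x - α))) ^ δ := by
        congr 1; field_simp; ring
    _ ≤ 1 + δ * (-(1 / (x - α))) := key
    _ = (x - (α + δ)) / (x - α) := by field_simp; ring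

lemma pt_upper_le_one (hα : 0 < α) (hδ0 : 0 < δ) (hδ : δ ≤ 1) (hx : α + δ + 1 ≤ x) :
    (x - (α + δ)) / (x - α) ≤ ((x - (α + δ)) / (x + 1 - (α + δ))) ^ δ := by
  have hy : (0:ℝ) < x - (α + δ) := by linarith
  have hxa : (0:ℝ) < x - α := by linarith
  have hy1 : (0:ℝ) < x + 1 - (α + δ) := by linarith
  have hs : (-1:ℝ) ≤ 1 / (x - (α + δ)) := by
    have : (0:ℝ) < 1 / (x - (α + δ)) := by positivity
    linarith
  have key := rpow_one_add_le_one_add_mul_self hs hδ0.le hδ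
  have key2 : ((x + 1 - (α + δ)) / (x - (α + δ))) ^ δ ≤ (x - α) / (x - (α + δ)) := by
    calc ((x + 1 - (α + δ)) / (x - (α + δ))) ^ δ = (1 + 1 / (x - (α + δ))) ^ δ := by
          congr 1; field_simp; ring
      _ ≤ 1 + δ * (1 / (x - (α + δ))) := key
      _ = (x - α) / (x - (α + δ)) := by field_simp; ring
  have hpos : (0:ℝ) < ((x + 1 - (α + δ)) / (x - (α + δ))) ^ δ := by
    apply Real.rpow_pos_of_pos; positivity
  have hinv := inv_anti₀ hpos key2
  rwa [← Real.inv_rpow (by positivity), inv_div, inv_div] at hinv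

lemma tendsto_ratio_aux (j : ℕ → ℕ) (ρ : ℝ)
    (hj : Tendsto (fun n : ℕ => (j n : ℝ) / n) atTop (nhds ρ)) (c₁ c₂ : ℝ) :
    Tendsto (fun n : ℕ => ((j n : ℝ) + c₁) / ((n : ℝ) + c₂)) atTop (nhds ρ) := by
  have hn1 : Tendsto (fun n : ℕ => (1:ℝ) / n) atTop (nhds 0) :=
    tendsto_one_div_atTop_nhds_zero_nat
  have hnum : Tendsto (fun n : ℕ => (j n : ℝ) / n + c₁ * (1 / n)) atTop (nhds (ρ + c₁ * 0)) :=
    hj.add (hn1.const_mul c₁)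
  have hden : Tendsto (fun n : ℕ => (1:ℝ) + c₂ * (1 / n)) atTop (nhds (1 + c₂ * 0)) :=
    tendsto_const_nhds.add (hn1.const_mul c₂)
  have hmain := hnum.div hden (by norm_num)
  simp only [mul_zero, add_zero, div_one] at hmain
  apply hmain.congr'
  filter_upwards [eventually_gt_atTop (⌈|c₂|⌉₊ + 1)] with n hn
  have hn0 : (0:ℝ) < n := by
    have : (0:ℕ) < n := by omega
    exact_mod_cast this
  have hc2 : (0:ℝ) < (n : ℝ) + c₂ := by
    have h1 : |c₂| < (n : ℝ) := by
      calc |c₂| ≤ ⌈|c₂|⌉₊ := Nat.le_ceil _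
        _ < (n : ℝ) := by exact_mod_cast Nat.lt_of_succ_lt hn
    have := neg_abs_le c₂
    linarith
  simp only [Pi.div_apply]
  field_simp

lemma prod_ratio_tendsto (hα : 0 < α) (hδ : 0 < δ)
    (hρ0 : 0 < ρ) (hρ1 : ρ < 1)
    (hj : Tendsto (fun n : ℕ => (j n : ℝ) / n) atTop (nhds ρ))
    (hjinf : Tendsto j atTop atTop) :
    Tendsto (fun n : ℕ => ∏ t ∈ Finset.range (n - j n),
      ((((j n : ℝ) + 1 + t) - (α + δ)) / (((j n : ℝ) + 1 + t) - α))) atTop (nhds (ρ ^ δ)) := by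
  set M : ℕ := ⌈α + δ⌉₊ + 1 with hM
  have hMr : α + δ + 1 ≤ (M : ℝ) := by
    have := Nat.le_ceil (α + δ)
    push_cast [hM]
    linarith
  have hlt : ∀ᶠ n in atTop, j n < n := by
    filter_upwards [hj.eventually_lt_const hρ1, eventually_ge_atTop 1] with n h1 h2
    have hn0 : (0:ℝ) < n := by exact_mod_cast Nat.lt_of_lt_of_le Nat.zero_lt_one h2
    have := (div_lt_one hn0).mp h1
    exact_mod_cast this
  have hev : ∀ᶠ n in atTop, M ≤ j n ∧ j n < n := (hjinf.eventually_ge_atTop M).and hlt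
  have hA : Tendsto (fun n : ℕ => (((j n : ℝ) - α) / ((n : ℝ) - α)) ^ δ) atTop (nhds (ρ ^ δ)) := by
    have h := (tendsto_ratio_aux j ρ hj (-α) (-α)).rpow_const (p := δ) (Or.inl hρ0.ne')
    refine h.congr fun n => ?_
    congr 1 <;> ring
  have hB : Tendsto (fun n : ℕ => (((j n : ℝ) + 1 - (α + δ)) / ((n : ℝ) + 1 - (α + δ))) ^ δ)
      atTop (nhds (ρ ^ δ)) := by
    have h := (tendsto_ratio_aux j ρ hj (1 - (α + δ)) (1 - (α + δ))).rpow_const (p := δ)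
      (Or.inl hρ0.ne')
    refine h.congr fun n => ?_
    congr 1 <;> ring
  have hx : ∀ n, M ≤ j n → ∀ t : ℕ, α + δ + 1 ≤ ((j n : ℝ) + 1 + t) := by
    intro n hMn t
    have h1 : (M : ℝ) ≤ (j n : ℝ) := by exact_mod_cast hMn
    have h2 : (0:ℝ) ≤ t := Nat.cast_nonneg t
    linarith
  have hAeq : ∀ n, M ≤ j n → j n < n →
      ∏ t ∈ Finset.range (n - j n),
        ((((j n : ℝ) + 1 + t) - 1 - α) / (((j n : ℝ) + 1 + t) - α)) ^ δ
      = (((j n : ℝ) - α) / ((n : ℝ) - α)) ^ δ := by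
    intro n hMn hn
    have h1 : (M : ℝ) ≤ (j n : ℝ) := by exact_mod_cast hMn
    have hpos : ∀ t : ℕ, (0:ℝ) < (j n : ℝ) + t - α := by
      intro t
      have h2 : (0:ℝ) ≤ t := Nat.cast_nonneg t
      linarith
    rw [Real.finset_prod_rpow _ _ (fun t _ => by
      have h2 := hpos t; have h3 := hpos (t+1); push_cast at h3
      apply div_nonneg <;> linarith) δ]
    congr 1
    have step : ∀ t ∈ Finset.range (n - j n),
        (((j n : ℝ) + 1 + t) - 1 - α) / (((j n : ℝ) + 1 + t) - α)
        = ((fun t : ℕ => (j n : ℝ) + t - α) t) / ((fun t : ℕ => (j n : ℝ) + t - α) (t + 1)) := by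
      intro t _
      simp only
      congr 1 <;> push_cast <;> ring
    rw [Finset.prod_congr rfl step,
      prod_div_telescope' (fun t : ℕ => (j n : ℝ) + t - α) (n - j n)
        (fun t _ => (hpos t).ne')]
    have hcast : ((n - j n : ℕ) : ℝ) = (n : ℝ) - (j n : ℝ) := by
      rw [Nat.cast_sub hn.le]
    simp only [Nat.cast_zero, hcast]
    congr 1 <;> ring
  have hBeq : ∀ n, M ≤ j n → j n < n →
      ∏ t ∈ Finset.range (n - j n),
        ((((j n : ℝ) + 1 + t) - (α + δ)) / (((j n : ℝ) + 1 + t) + 1 - (α + δ))) ^ δ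
      = (((j n : ℝ) + 1 - (α + δ)) / ((n : ℝ) + 1 - (α + δ))) ^ δ := by
    intro n hMn hn
    have h1 : (M : ℝ) ≤ (j n : ℝ) := by exact_mod_cast hMn
    have hpos : ∀ t : ℕ, (0:ℝ) < (j n : ℝ) + 1 + t - (α + δ) := by
      intro t
      have h2 : (0:ℝ) ≤ t := Nat.cast_nonneg t
      linarith
    rw [Real.finset_prod_rpow _ _ (fun t _ => by
      have h2 := hpos t; have h3 := hpos (t+1); push_cast at h3
      apply div_nonneg <;> linarith) δ]
    congr 1
    have step : ∀ t ∈ Finset.range (n - j n),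
        (((j n : ℝ) + 1 + t) - (α + δ)) / (((j n : ℝ) + 1 + t) + 1 - (α + δ))
        = ((fun t : ℕ => (j n : ℝ) + 1 + t - (α + δ)) t)
          / ((fun t : ℕ => (j n : ℝ) + 1 + t - (α + δ)) (t + 1)) := by
      intro t _
      simp only
      congr 1 <;> push_cast <;> ring
    rw [Finset.prod_congr rfl step,
      prod_div_telescope' (fun t : ℕ => (j n : ℝ) + 1 + t - (α + δ)) (n - j n)
        (fun t _ => (hpos t).ne')]
    have hcast : ((n - j n : ℕ) : ℝ) = (n : ℝ) - (j n : ℝ) := by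
      rw [Nat.cast_sub hn.le]
    simp only [Nat.cast_zero, hcast]
    congr 1 <;> ring
  have hterm_nonneg : ∀ n, M ≤ j n → ∀ t : ℕ,
      (0:ℝ) ≤ (((j n : ℝ) + 1 + t) - (α + δ)) / (((j n : ℝ) + 1 + t) - α) := by
    intro n hMn t
    have h := hx n hMn t
    have h1 : (0:ℝ) < ((j n : ℝ) + 1 + t) - (α + δ) := by linarith
    have h2 : (0:ℝ) < ((j n : ℝ) + 1 + t) - α := by linarith
    positivity
  rcases le_total 1 δ with hδ1 | hδ1
  · apply tendsto_of_tendsto_of_tendsto_of_le_of_le' hB hA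
    · filter_upwards [hev] with n ⟨hMn, hn⟩
      rw [← hBeq n hMn hn]
      apply Finset.prod_le_prod
      · intro t _
        apply Real.rpow_nonneg
        have h := hx n hMn t
        have h1 : (0:ℝ) < ((j n : ℝ) + 1 + t) - (α + δ) := by linarith
        have h2 : (0:ℝ) < ((j n : ℝ) + 1 + t) + 1 - (α + δ) := by linarith
        positivity
      · intro t _
        exact pt_lower_ge_one hα hδ1 (hx n hMn t)
    · filter_upwards [hev] with n ⟨hMn, hn⟩
      rw [← hAeq n hMn hn]
      apply Finset.prod_le_prod
      · intro t _
        exact hterm_nonneg n hMn t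
      · intro t _
        exact pt_upper_ge_one hα hδ1 (hx n hMn t)
  · apply tendsto_of_tendsto_of_tendsto_of_le_of_le' hA hB
    · filter_upwards [hev] with n ⟨hMn, hn⟩
      rw [← hAeq n hMn hn]
      apply Finset.prod_le_prod
      · intro t _
        apply Real.rpow_nonneg
        have h := hx n hMn t
        have h1 : (0:ℝ) < ((j n : ℝ) + 1 + t) - 1 - α := by linarith
        have h2 : (0:ℝ) < ((j n : ℝ) + 1 + t) - α := by linarith
        positivity
      · intro t _
        exact pt_lower_le_one hα hδ hδ1 (hx n hMn t)
    · filter_upwards [hev] with n ⟨hMn, hn⟩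
      rw [← hBeq n hMn hn]
      apply Finset.prod_le_prod
      · intro t _
        exact hterm_nonneg n hMn t
      · intro t _
        exact pt_upper_le_one hα hδ hδ1 (hx n hMn t)

/-- Exact rewriting of `Pdeg` as a signed sum of quotient products. -/
lemma Pdeg_eq (k : ℕ) (hk : 1 ≤ k) (n j m : ℕ) (hjn : j ≤ n) :
    Pdeg k n j m = ∑ ℓ ∈ Finset.range (m + 1), (Nat.choose m ℓ : ℝ) * (-1) ^ ℓ *
      ∏ t ∈ Finset.range (n - j),
        (((j : ℝ) + 1 + t) - (k : ℝ) * (2 + ℓ) / (k + 1)) / (((j : ℝ) + 1 + t) - k / (k + 1)) := by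
  have hα1 : (k : ℝ) / (k + 1) < 1 := by
    rw [div_lt_one (by positivity)]
    linarith
  set α : ℝ := (k : ℝ) / (k + 1) with hαdef
  have hP1 : ∏ i ∈ Finset.range j, ((j : ℝ) - α - i) = ∏ i ∈ Finset.range j, (1 - α + i) := by
    rw [prod_reflect]
    apply Finset.prod_congr rfl
    intro i _
    ring
  have hP2 : ∏ i ∈ Finset.range n, ((n : ℝ) - α - i)
      = (∏ i ∈ Finset.range j, (1 - α + i)) * ∏ i ∈ Finset.range (n - j), ((j : ℝ) + 1 + i - α) := by
    rw [prod_reflect]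
    have hsplit : n = j + (n - j) := by omega
    calc ∏ i ∈ Finset.range n, ((n:ℝ) - α - n + 1 + i)
        = ∏ i ∈ Finset.range (j + (n - j)), ((n:ℝ) - α - n + 1 + i) := by rw [← hsplit]
      _ = (∏ i ∈ Finset.range j, ((n:ℝ) - α - n + 1 + i))
          * ∏ i ∈ Finset.range (n - j), ((n:ℝ) - α - n + 1 + (j + i : ℕ)) := by
          rw [Finset.prod_range_add]
      _ = _ := by
          congr 1
          · apply Finset.prod_congr rfl; intro i _; ring
          · apply Finset.prod_congr rfl; intro i _; push_cast; ring
  have hP3 : ∀ ℓ : ℕ, ∏ i ∈ Finset.range (n - j), ((n : ℝ) - (k : ℝ) * (2 + ℓ) / (k + 1) - i)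
      = ∏ i ∈ Finset.range (n - j), ((j : ℝ) + 1 + i - (k : ℝ) * (2 + ℓ) / (k + 1)) := by
    intro ℓ
    rw [prod_reflect]
    apply Finset.prod_congr rfl
    intro i _
    have hcast : ((n - j : ℕ) : ℝ) = (n : ℝ) - j := by rw [Nat.cast_sub hjn]
    rw [hcast]
    ring
  have hQpos : (0:ℝ) < ∏ i ∈ Finset.range (n - j), ((j : ℝ) + 1 + i - α) := by
    apply Finset.prod_pos
    intro i _
    have : (0:ℝ) ≤ i := Nat.cast_nonneg i
    have : (0:ℝ) ≤ (j:ℝ) := Nat.cast_nonneg j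
    nlinarith [hα1]
  have hP1pos : (0:ℝ) < ∏ i ∈ Finset.range j, (1 - α + (i:ℝ)) := by
    apply Finset.prod_pos
    intro i _
    have : (0:ℝ) ≤ i := Nat.cast_nonneg i
    linarith
  have hfactj : (0:ℝ) < (Nat.factorial j : ℝ) := by exact_mod_cast Nat.factorial_pos j
  have hfactn : (0:ℝ) < (Nat.factorial n : ℝ) := by exact_mod_cast Nat.factorial_pos n
  have hfactnj : (0:ℝ) < (Nat.factorial (n - j) : ℝ) := by exact_mod_cast Nat.factorial_pos (n - j)
  have hchoose : (0:ℝ) < (Nat.choose n j : ℝ) := by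
    exact_mod_cast Nat.choose_pos hjn
  have hfact : (Nat.factorial n : ℝ)
      = (Nat.choose n j : ℝ) * (Nat.factorial j : ℝ) * (Nat.factorial (n - j) : ℝ) := by
    exact_mod_cast (Nat.choose_mul_factorial_mul_factorial hjn).symm
  unfold Pdeg gbinom
  rw [Finset.mul_sum]
  apply Finset.sum_congr rfl
  intro ℓ _
  rw [hP1, hP2, hP3 ℓ, Finset.prod_div_distrib, hfact]
  field_simp
  ring_nf
  congr 1
  apply Finset.prod_congr rfl
  intro x _
  ring

end Aux

/-- Central region: if `j(n)/n → ρ ∈ (0,1)`, then `Y_{n,j}` converges in distribution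
to a geometric law with success probability `ρ^{k/(k+1)}`. -/
theorem ktree_outdegree_central (k : ℕ) (hk : 1 ≤ k) (j : ℕ → ℕ) (ρ : ℝ)
    (hρ0 : 0 < ρ) (hρ1 : ρ < 1)
    (hj : Tendsto (fun n : ℕ => (j n : ℝ) / n) atTop (nhds ρ))
    (hjinf : Tendsto j atTop atTop) (m : ℕ) :
    Tendsto (fun n : ℕ => Pdeg k n (j n) m) atTop
      (nhds (ρ ^ ((k : ℝ) / ((k : ℝ) + 1)) * (1 - ρ ^ ((k : ℝ) / ((k : ℝ) + 1))) ^ m)) := by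
  have hk0 : (0:ℝ) < (k:ℝ) := by
    have : (0:ℕ) < k := hk
    exact_mod_cast this
  have hα0 : (0:ℝ) < (k:ℝ) / ((k:ℝ) + 1) := by positivity
  -- per-ℓ limits
  have hterm : ∀ ℓ : ℕ, Tendsto (fun n : ℕ => ∏ t ∈ Finset.range (n - j n),
      (((j n : ℝ) + 1 + t) - (k : ℝ) * (2 + ℓ) / (k + 1)) / (((j n : ℝ) + 1 + t) - (k:ℝ) / ((k:ℝ) + 1)))
      atTop (nhds (ρ ^ ((k:ℝ) / ((k:ℝ) + 1) * (1 + ℓ)))) := by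
    intro ℓ
    have hδ0 : (0:ℝ) < (k:ℝ) / ((k:ℝ) + 1) * (1 + ℓ) := by positivity
    have h := prod_ratio_tendsto (α := (k:ℝ) / ((k:ℝ) + 1)) (δ := (k:ℝ) / ((k:ℝ) + 1) * (1 + ℓ))
      hα0 hδ0 hρ0 hρ1 hj hjinf
    refine h.congr fun n => ?_
    apply Finset.prod_congr rfl
    intro t _
    congr 1
    ring
  -- sum of limits
  have hsum : Tendsto (fun n : ℕ => ∑ ℓ ∈ Finset.range (m + 1),
      (Nat.choose m ℓ : ℝ) * (-1) ^ ℓ *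
        ∏ t ∈ Finset.range (n - j n),
          (((j n : ℝ) + 1 + t) - (k : ℝ) * (2 + ℓ) / (k + 1))
            / (((j n : ℝ) + 1 + t) - (k:ℝ) / ((k:ℝ) + 1))) atTop
      (nhds (∑ ℓ ∈ Finset.range (m + 1),
        (Nat.choose m ℓ : ℝ) * (-1) ^ ℓ * ρ ^ ((k:ℝ) / ((k:ℝ) + 1) * (1 + ℓ)))) :=
    tendsto_finset_sum _ (fun ℓ _ => ((hterm ℓ).const_mul _))
  -- identify the limit value
  have hval : ∑ ℓ ∈ Finset.range (m + 1),
      (Nat.choose m ℓ : ℝ) * (-1) ^ ℓ * ρ ^ ((k:ℝ) / ((k:ℝ) + 1) * (1 + ℓ))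
      = ρ ^ ((k : ℝ) / ((k : ℝ) + 1)) * (1 - ρ ^ ((k : ℝ) / ((k : ℝ) + 1))) ^ m := by
    have hx : ∀ ℓ : ℕ, ρ ^ ((k:ℝ) / ((k:ℝ) + 1) * (1 + (ℓ:ℝ)))
        = ρ ^ ((k:ℝ) / ((k:ℝ) + 1)) * (ρ ^ ((k:ℝ) / ((k:ℝ) + 1))) ^ ℓ := by
      intro ℓ
      rw [show (k:ℝ) / ((k:ℝ) + 1) * (1 + (ℓ:ℝ))
          = (k:ℝ) / ((k:ℝ) + 1) + (k:ℝ) / ((k:ℝ) + 1) * ℓ by ring,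
        Real.rpow_add hρ0, Real.rpow_mul hρ0.le, Real.rpow_natCast]
    simp only [hx]
    rw [show (1 - ρ ^ ((k : ℝ) / ((k : ℝ) + 1))) = -(ρ ^ ((k : ℝ) / ((k : ℝ) + 1))) + 1 by ring,
      add_pow, Finset.mul_sum]
    apply Finset.sum_congr rfl
    intro ℓ _
    rw [neg_pow]
    ring
  rw [hval] at hsum
  -- conclude via the exact identity
  refine Tendsto.congr' ?_ hsum
  have hjle : ∀ᶠ n in atTop, j n ≤ n := by
    filter_upwards [hj.eventually_lt_const hρ1, eventually_ge_atTop 1] with n h1 h2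
    have hn0 : (0:ℝ) < n := by exact_mod_cast Nat.lt_of_lt_of_le Nat.zero_lt_one h2
    have := (div_lt_one hn0).mp h1
    have hlt : j n < n := by exact_mod_cast this
    exact hlt.le
  filter_upwards [hjle] with n hn
  exact (Pdeg_eq k hk n (j n) m hn).symm
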